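/- The up-down filtration obtained from a non-repetitive filtration F by listing all additions of F first (in their order of occurrence in F) and then all deletions (in their order of occurrence in F) is a well-defined simplex-wise filtration, i.e., at each addition step all proper faces of the added simplex are present, and at each deletion step the deleted simplex is maximal. -/

import Mathlib

/-- An (abstract) simplicial complex: a finite family of finite nonempty
vertex sets closed under taking nonempty subsets. -/
def IsComplex {V : Type} [DecidableEq V] (K : Finset (Finset V)) : Prop :=
  ∀ s ∈ K, s.Nonempty ∧ ∀ t ⊆ s, t.Nonempty → t ∈ K

/-- Given a non-repetitive simplex-wise zigzag filtration `F` of total complex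
`K`, the up-down filtration `U` obtained by performing all additions of `F`
first (in their order in `F`), and then all deletions of `F` (in their order in
`F`), is a well-defined simplex-wise filtration: at each addition step all
proper faces of the added simplex are already present (and the simplex itself
is not), and at each deletion step the deleted simplex is present and maximal.
Moreover the ascending half ends at `K` and the descending half ends at `∅`. -/
theorem updown_filtration_well_defined {V : Type} [DecidableEq V]
    (m : ℕ) (Ks : ℕ → Finset (Finset V)) (adds : ℕ → Bool) (σs : ℕ → Finset V)
    (K : Finset (Finset V))
    (hcplx : ∀ i ≤ m, IsComplex (Ks i))
    (h0 : Ks 0 = ∅) (hm : Ks m = ∅)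
    (hstep : ∀ i < m,
      (adds i = true ∧ σs i ∉ Ks i ∧ Ks (i + 1) = insert (σs i) (Ks i)) ∨
      (adds i = false ∧ σs i ∈ Ks i ∧ Ks (i + 1) = (Ks i).erase (σs i)))
    (hnonrep : ∀ (σ : Finset V) (i j l : ℕ), i ≤ j → j ≤ l → l ≤ m →
      σ ∈ Ks i → σ ∉ Ks j → σ ∉ Ks l)
    (hK : ∀ σ : Finset V, σ ∈ K ↔ ∃ i ≤ m, σ ∈ Ks i)
    -- `A` (resp. `D`) lists the addition (resp. deletion) steps of `F` in order
    (A D : List ℕ)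
    (hA : A = (List.range m).filter fun i => adds i = true)
    (hD : D = (List.range m).filter fun i => adds i = false)
    -- the complexes of the ascending half of `U`
    (Us : ℕ → Finset (Finset V))
    (hUs : ∀ l, Us l = ((A.take l).map σs).toFinset)
    -- the complexes of the descending half of `U`
    (Ws : ℕ → Finset (Finset V))
    (hWs : ∀ l, Ws l = K \ ((D.take l).map σs).toFinset) :
    Us A.length = K ∧ Ws D.length = ∅ ∧
    (∀ l (hl : l < A.length),
      σs (A.get ⟨l, hl⟩) ∉ Us l ∧
      Us (l + 1) = insert (σs (A.get ⟨l, hl⟩)) (Us l) ∧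
      ∀ t ⊆ σs (A.get ⟨l, hl⟩), t ≠ σs (A.get ⟨l, hl⟩) → t.Nonempty → t ∈ Us l) ∧
    (∀ l (hl : l < D.length),
      σs (D.get ⟨l, hl⟩) ∈ Ws l ∧
      Ws (l + 1) = (Ws l).erase (σs (D.get ⟨l, hl⟩)) ∧
      ∀ s ∈ Ws l, σs (D.get ⟨l, hl⟩) ⊆ s → s = σs (D.get ⟨l, hl⟩)) := by
  -- membership characterizations of `A` and `D`
  have memA : ∀ a, a ∈ A ↔ a < m ∧ adds a = true := by
    intro a; simp [hA, List.mem_filter, List.mem_range]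
  have memD : ∀ d, d ∈ D ↔ d < m ∧ adds d = false := by
    intro d; simp [hD, List.mem_filter, List.mem_range]
  have addA : ∀ a ∈ A, σs a ∉ Ks a ∧ Ks (a + 1) = insert (σs a) (Ks a) := by
    intro a ha
    obtain ⟨ham, hadd⟩ := (memA a).1 ha
    rcases hstep a ham with ⟨_, h⟩ | ⟨h, _⟩
    · exact h
    · rw [hadd] at h; exact absurd h (by simp)
  have delD : ∀ d ∈ D, σs d ∈ Ks d ∧ Ks (d + 1) = (Ks d).erase (σs d) := by
    intro d hd
    obtain ⟨hdm, hdel⟩ := (memD d).1 hd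
    rcases hstep d hdm with ⟨h, _⟩ | ⟨_, h⟩
    · rw [hdel] at h; exact absurd h (by simp)
    · exact h
  -- `σs` is injective on `A` and on `D`
  have injA : ∀ a ∈ A, ∀ b ∈ A, σs a = σs b → a = b := by
    intro a ha b hb hab
    by_contra hne
    wlog hlt : a < b generalizing a b
    · exact this b hb a ha hab.symm (Ne.symm hne) (by omega)
    have hbm := ((memA b).1 hb).1
    have h1 : σs a ∈ Ks (a + 1) := by
      rw [(addA a ha).2]; exact Finset.mem_insert_self _ _
    have h2 : σs a ∉ Ks b := hab ▸ (addA b hb).1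
    have h3 : σs a ∈ Ks (b + 1) := by
      rw [hab, (addA b hb).2]; exact Finset.mem_insert_self _ _
    exact hnonrep (σs a) (a + 1) b (b + 1) (by omega) (by omega) (by omega) h1 h2 h3
  have injD : ∀ a ∈ D, ∀ b ∈ D, σs a = σs b → a = b := by
    intro a ha b hb hab
    by_contra hne
    wlog hlt : a < b generalizing a b
    · exact this b hb a ha hab.symm (Ne.symm hne) (by omega)
    have hbm := ((memD b).1 hb).1
    have h1 : σs a ∈ Ks a := (delD a ha).1
    have h2 : σs a ∉ Ks (a + 1) := by
      rw [(delD a ha).2]; exact Finset.notMem_erase _ _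
    have h3 : σs a ∈ Ks b := hab ▸ (delD b hb).1
    exact hnonrep (σs a) a (a + 1) b (by omega) (by omega) (by omega) h1 h2 h3
  -- every simplex present at time `i` was added at some earlier addition step
  have firstAdd : ∀ i, i ≤ m → ∀ σ, σ ∈ Ks i → ∃ a ∈ A, σs a = σ ∧ a < i := by
    intro i
    induction i with
    | zero => intro _ σ hσ; rw [h0] at hσ; exact absurd hσ (Finset.notMem_empty σ)
    | succ n ih =>
      intro hnm σ hσ
      rcases hstep n (by omega) with ⟨hadd, hnot, heq⟩ | ⟨hdel, hmem, heq⟩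
      · rw [heq] at hσ
        rcases Finset.mem_insert.1 hσ with h | hσ'
        · exact ⟨n, (memA n).2 ⟨by omega, hadd⟩, h.symm, by omega⟩
        · obtain ⟨a, ha, h1, h2⟩ := ih (by omega) σ hσ'
          exact ⟨a, ha, h1, by omega⟩
      · rw [heq] at hσ
        obtain ⟨a, ha, h1, h2⟩ := ih (by omega) σ (Finset.mem_of_mem_erase hσ)
        exact ⟨a, ha, h1, by omega⟩
  -- every simplex present at time `i` is deleted at some later deletion step
  have lastDel : ∀ k i, i ≤ m → m - i ≤ k → ∀ σ, σ ∈ Ks i → ∃ d ∈ D, σs d = σ ∧ i ≤ d := by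
    intro k
    induction k with
    | zero =>
      intro i him hk σ hσ
      have hieq : i = m := by omega
      subst hieq
      rw [hm] at hσ; exact absurd hσ (Finset.notMem_empty σ)
    | succ n ih =>
      intro i him hk σ hσ
      rcases eq_or_lt_of_le him with heq | hlt
      · subst heq; rw [hm] at hσ; exact absurd hσ (Finset.notMem_empty σ)
      rcases hstep i hlt with ⟨hadd, hnot, heq⟩ | ⟨hdel, hmem, heq⟩
      · have hσ' : σ ∈ Ks (i + 1) := by rw [heq]; exact Finset.mem_insert_of_mem hσ
        obtain ⟨d, hd, h1, h2⟩ := ih (i + 1) (by omega) (by omega) σ hσ'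
        exact ⟨d, hd, h1, by omega⟩
      · by_cases hcase : σ = σs i
        · exact ⟨i, (memD i).2 ⟨hlt, hdel⟩, hcase.symm, le_refl i⟩
        · have hσ' : σ ∈ Ks (i + 1) := by
            rw [heq]; exact Finset.mem_erase.2 ⟨hcase, hσ⟩
          obtain ⟨d, hd, h1, h2⟩ := ih (i + 1) (by omega) (by omega) σ hσ'
          exact ⟨d, hd, h1, by omega⟩
  have memKofA : ∀ a ∈ A, σs a ∈ K := by
    intro a ha
    have ham := ((memA a).1 ha).1
    exact (hK _).2 ⟨a + 1, by omega,
      by rw [(addA a ha).2]; exact Finset.mem_insert_self _ _⟩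
  have memKofD : ∀ d ∈ D, σs d ∈ K := by
    intro d hd
    have hdm := ((memD d).1 hd).1
    exact (hK _).2 ⟨d, by omega, (delD d hd).1⟩
  have KA : (A.map σs).toFinset = K := by
    ext σ
    simp only [List.mem_toFinset, List.mem_map]
    constructor
    · rintro ⟨a, ha, rfl⟩; exact memKofA a ha
    · intro hσ
      obtain ⟨i, him, hi⟩ := (hK σ).1 hσ
      obtain ⟨a, ha, h1, _⟩ := firstAdd i him σ hi
      exact ⟨a, ha, h1⟩
  have KD : (D.map σs).toFinset = K := by
    ext σ
    simp only [List.mem_toFinset, List.mem_map]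
    constructor
    · rintro ⟨d, hd, rfl⟩; exact memKofD d hd
    · intro hσ
      obtain ⟨i, him, hi⟩ := (hK σ).1 hσ
      obtain ⟨d, hd, h1, _⟩ := lastDel (m - i) i him (le_refl _) σ hi
      exact ⟨d, hd, h1⟩
  have sortedA : A.SortedLT := by
    rw [hA]; exact List.sortedLT_iff_pairwise.2 ((@List.pairwise_lt_range m).filter _)
  have sortedD : D.SortedLT := by
    rw [hD]; exact List.sortedLT_iff_pairwise.2 ((@List.pairwise_lt_range m).filter _)
  -- membership in `take` for sorted lists
  have getMemTake : ∀ (L : List ℕ) (l k : ℕ) (hk : k < L.length),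
      k < l → L.get ⟨k, hk⟩ ∈ L.take l := by
    intro L l k hk hkl
    have h1 : (L.take l)[k]? = some (L.get ⟨k, hk⟩) := by
      rw [List.getElem?_take_of_lt hkl, List.getElem?_eq_getElem hk]
      simp [List.get_eq_getElem]
    exact List.mem_of_getElem? h1
  have memTake : ∀ (L : List ℕ), L.SortedLT → ∀ (l : ℕ) (hl : l < L.length) (b : ℕ),
      b ∈ L → b < L.get ⟨l, hl⟩ → b ∈ L.take l := by
    intro L hs l hl b hb hblt
    obtain ⟨⟨k, hk⟩, rfl⟩ := List.mem_iff_get.1 hb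
    have hkl : k < l := by
      by_contra h
      have hle : L.get ⟨l, hl⟩ ≤ L.get ⟨k, hk⟩ :=
        hs.strictMono_get.monotone (by simp only [Fin.mk_le_mk]; omega)
      omega
    exact getMemTake L l k hk hkl
  have notMemTake : ∀ (L : List ℕ), L.SortedLT → ∀ (l : ℕ) (hl : l < L.length),
      L.get ⟨l, hl⟩ ∉ L.take l := by
    intro L hs l hl hmem
    obtain ⟨k, hk, hkeq⟩ := List.mem_iff_getElem.1 hmem
    have hkl : k < l := by
      have := hk; simp only [List.length_take] at this; omega
    have hk' : k < L.length := by
      have := hk; simp only [List.length_take] at this; omega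
    have h1 : (L.take l)[k]? = L[k]? := List.getElem?_take_of_lt hkl
    rw [List.getElem?_eq_getElem hk, List.getElem?_eq_getElem hk', Option.some_inj] at h1
    have h2 : L.get ⟨k, hk'⟩ < L.get ⟨l, hl⟩ := hs.strictMono_get (Fin.mk_lt_mk.2 hkl)
    rw [List.get_eq_getElem] at h2
    simp only [← h1, hkeq, List.get_eq_getElem] at h2
    omega
  refine ⟨by rw [hUs, List.take_length, KA],
    by rw [hWs, List.take_length, KD]; exact Finset.sdiff_self K, ?_, ?_⟩
  · -- addition steps
    intro l hl
    set a := A.get ⟨l, hl⟩ with ha_def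
    have haA : a ∈ A := List.get_mem A ⟨l, hl⟩
    have ham : a < m := ((memA a).1 haA).1
    refine ⟨?_, ?_, ?_⟩
    · rw [hUs]
      simp only [List.mem_toFinset, List.mem_map]
      rintro ⟨b, hb, hba⟩
      have hbA : b ∈ A := List.mem_of_mem_take hb
      have hbeq := injA b hbA a haA hba
      subst hbeq
      exact notMemTake A sortedA l hl hb
    · ext τ
      rw [hUs, hUs, ← List.take_concat_get hl, List.concat_eq_append]
      simp only [List.map_append, List.toFinset_append, Finset.mem_union,
        List.mem_toFinset, List.map_cons, List.map_nil, List.toFinset_cons,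
        List.toFinset_nil, LawfulSingleton.insert_empty_eq, Finset.mem_singleton,
        Finset.mem_insert, List.get_eq_getElem, ha_def]
      tauto
    · intro t hts htne htne'
      have h1 : σs a ∈ Ks (a + 1) := by
        rw [(addA a haA).2]; exact Finset.mem_insert_self _ _
      have h2 : t ∈ Ks (a + 1) := ((hcplx (a + 1) (by omega)) (σs a) h1).2 t hts htne'
      have h3 : t ∈ Ks a := by
        rw [(addA a haA).2] at h2
        rcases Finset.mem_insert.1 h2 with h | h
        · exact absurd h htne
        · exact h
      obtain ⟨b, hbA, hbt, hba⟩ := firstAdd a (by omega) t h3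
      rw [hUs]
      simp only [List.mem_toFinset, List.mem_map]
      exact ⟨b, memTake A sortedA l hl b hbA hba, hbt⟩
  · -- deletion steps
    intro l hl
    set d := D.get ⟨l, hl⟩ with hd_def
    have hdD : d ∈ D := List.get_mem D ⟨l, hl⟩
    have hdm : d < m := ((memD d).1 hdD).1
    refine ⟨?_, ?_, ?_⟩
    · rw [hWs]
      refine Finset.mem_sdiff.2 ⟨memKofD d hdD, ?_⟩
      simp only [List.mem_toFinset, List.mem_map]
      rintro ⟨b, hb, hbd⟩
      have hbD : b ∈ D := List.mem_of_mem_take hb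
      have hbeq := injD b hbD d hdD hbd
      subst hbeq
      exact notMemTake D sortedD l hl hb
    · ext τ
      rw [hWs, hWs, ← List.take_concat_get hl, List.concat_eq_append]
      simp only [List.map_append, List.toFinset_append, Finset.mem_sdiff,
        Finset.mem_union, List.mem_toFinset, List.map_cons, List.map_nil,
        List.toFinset_cons, List.toFinset_nil, LawfulSingleton.insert_empty_eq,
        Finset.mem_singleton, Finset.mem_erase, List.get_eq_getElem, hd_def]
      tauto
    · intro s hs hsub
      by_contra hne
      rw [hWs] at hs
      obtain ⟨hsK, hsdel⟩ := Finset.mem_sdiff.1 hs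
      obtain ⟨i, him, hi⟩ := (hK s).1 hsK
      obtain ⟨e, heD, hes, hie⟩ := lastDel (m - i) i him (le_refl _) s hi
      have hem : e < m := ((memD e).1 heD).1
      have hsKe : s ∈ Ks e := hes ▸ (delD e heD).1
      have heNot : e ∉ D.take l := by
        intro h
        exact hsdel (by
          simp only [List.mem_toFinset, List.mem_map]
          exact ⟨e, h, hes⟩)
      have hde : d ≤ e := by
        obtain ⟨⟨k, hk⟩, hkeq⟩ := List.mem_iff_get.1 heD
        have hlk : l ≤ k := by
          by_contra h
          exact heNot (hkeq ▸ getMemTake D l k hk (by omega))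
        have := sortedD.strictMono_get.monotone
          (show (⟨l, hl⟩ : Fin D.length) ≤ ⟨k, hk⟩ from by
            simp only [Fin.mk_le_mk]; omega)
        rw [hkeq] at this
        exact this
      have hdne : d ≠ e := by
        intro h
        exact hne (by rw [← hes, ← h])
      have hσd : σs d ∈ Ks d := (delD d hdD).1
      have hσnd : σs d ∉ Ks (d + 1) := by
        rw [(delD d hdD).2]; exact Finset.notMem_erase _ _
      have hσe : σs d ∈ Ks e :=
        ((hcplx e (by omega)) s hsKe).2 (σs d) hsub ((hcplx d (by omega)) (σs d) hσd).1
      exact hnonrep (σs d) d (d + 1) e (by omega) (by omega) (by omega) hσd hσnd hσe
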